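/- Let $0<\alpha<1$ and $\mu>0$ be real numbers, and set $$k(t)=\frac{t^{-\alpha}}{\Gamma(1-\alpha)}e^{-\mu t},\qquad l(t)=\frac{t^{\alpha-1}}{\Gamma(\alpha)}e^{-\mu t}+\mu\int_0^t\frac{s^{\alpha-1}}{\Gamma(\alpha)}e^{-\mu s}\,ds.$$ Then $(k\ast l)(t)=\int_0^t k(t-s)l(s)\,ds=1$ for every real $t>0$; that is, the tempered fractional pair $(k,l)$ satisfies the Sonine condition. -/

import Mathlib

open Real MeasureTheory Set intervalIntegral
open scoped Convolution

/-! ### Auxiliary lemmas -/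

lemma ii_rpow_exp {r : ℝ} (hr : -1 < r) (c a b : ℝ) :
    IntervalIntegrable (fun x => x ^ r * Real.exp (c * x)) volume a b :=
  (intervalIntegral.intervalIntegrable_rpow' hr).mul_continuousOn
    ((Real.continuous_exp.comp (continuous_const.mul continuous_id)).continuousOn)

lemma beta_real {α : ℝ} (hα0 : 0 < α) (hα1 : α < 1) :
    ∫ x in (0:ℝ)..1, x ^ (α - 1) * (1 - x) ^ (-α) = Real.Gamma α * Real.Gamma (1 - α) := by
  have h1α : (0:ℝ) < 1 - α := by linarith
  have h := Complex.Gamma_mul_Gamma_eq_betaIntegral (s := (α:ℂ)) (t := ((1 - α : ℝ):ℂ))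
    (by simpa using hα0) (by simpa using h1α)
  rw [show (α:ℂ) + ((1-α:ℝ):ℂ) = 1 by push_cast; ring, Complex.Gamma_one, one_mul] at h
  have h2 : Complex.betaIntegral (α:ℂ) ((1-α:ℝ):ℂ)
      = ((∫ x in (0:ℝ)..1, x ^ (α - 1) * (1 - x) ^ (-α) : ℝ) : ℂ) := by
    rw [Complex.betaIntegral, ← intervalIntegral.integral_ofReal]
    refine intervalIntegral.integral_congr fun x hx => ?_
    rw [Set.uIcc_of_le (by norm_num : (0:ℝ) ≤ 1)] at hx
    rw [show ((α:ℂ) - 1) = ((α - 1 : ℝ):ℂ) by push_cast; ring,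
      show (((1 - α : ℝ):ℂ) - 1) = ((-α : ℝ):ℂ) by push_cast; ring,
      show (1 - ((x:ℝ):ℂ)) = ((1 - x : ℝ):ℂ) by push_cast; ring,
      ← Complex.ofReal_cpow hx.1, ← Complex.ofReal_cpow (by linarith [hx.2] : (0:ℝ) ≤ 1 - x),
      ← Complex.ofReal_mul]
  rw [h2, Complex.Gamma_ofReal, Complex.Gamma_ofReal, ← Complex.ofReal_mul] at h
  exact_mod_cast h.symm

lemma beta_scaled {α : ℝ} (hα0 : 0 < α) (hα1 : α < 1) {x : ℝ} (hx : 0 < x) :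
    ∫ s in (0:ℝ)..x, s ^ (α - 1) * (x - s) ^ (-α) = Real.Gamma α * Real.Gamma (1 - α) := by
  have h := intervalIntegral.integral_comp_mul_left
      (f := fun s => s ^ (α - 1) * (x - s) ^ (-α)) (a := 0) (b := 1) (c := x) hx.ne'
  simp only [mul_zero, mul_one, smul_eq_mul] at h
  have h2 : ∫ y in (0:ℝ)..1, (x * y) ^ (α - 1) * (x - x * y) ^ (-α)
      = x⁻¹ * (Real.Gamma α * Real.Gamma (1 - α)) := by
    rw [← beta_real hα0 hα1, ← intervalIntegral.integral_const_mul]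
    refine intervalIntegral.integral_congr fun y hy => ?_
    rw [Set.uIcc_of_le (by norm_num : (0:ℝ) ≤ 1)] at hy
    have h1y : (0:ℝ) ≤ 1 - y := by linarith [hy.2]
    rw [show x - x * y = x * (1 - y) by ring, Real.mul_rpow hx.le hy.1,
      Real.mul_rpow hx.le h1y]
    rw [show x ^ (α-1) * y ^ (α-1) * (x ^ (-α) * (1-y) ^ (-α))
        = (x ^ (α-1) * x ^ (-α)) * (y ^ (α-1) * (1-y) ^ (-α)) by ring,
      ← Real.rpow_add hx, show α - 1 + -α = -1 by ring, Real.rpow_neg_one]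
  rw [h2] at h
  have hx' : x ≠ 0 := hx.ne'
  field_simp at h
  linarith [h]

lemma sonine_core {α μ : ℝ} (hα0 : 0 < α) (hα1 : α < 1) {x : ℝ} (hx : 0 < x) :
    ∫ s in (0:ℝ)..x, (s ^ (α-1) / Real.Gamma α * Real.exp (-μ * s)) *
      ((x - s) ^ (-α) / Real.Gamma (1-α) * Real.exp (-μ * (x - s))) = Real.exp (-μ * x) := by
  have hΓ1 : 0 < Real.Gamma α := Real.Gamma_pos_of_pos hα0
  have hΓ2 : 0 < Real.Gamma (1 - α) := Real.Gamma_pos_of_pos (by linarith)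
  have h : ∀ s : ℝ, (s ^ (α-1) / Real.Gamma α * Real.exp (-μ * s)) *
      ((x - s) ^ (-α) / Real.Gamma (1-α) * Real.exp (-μ * (x - s)))
      = (Real.Gamma α * Real.Gamma (1-α))⁻¹ * Real.exp (-μ * x)
        * (s ^ (α-1) * (x - s) ^ (-α)) := by
    intro s
    rw [show -μ * x = (-μ * s) + (-μ * (x - s)) by ring, Real.exp_add]
    field_simp
  rw [intervalIntegral.integral_congr (fun s _ => h s),
    intervalIntegral.integral_const_mul, beta_scaled hα0 hα1 hx]
  field_simp

/-! ### Convolution helpers -/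

lemma ind_conv_integrand (f g : ℝ → ℝ) (y : ℝ) :
    (fun s => (Set.indicator (Set.Ioi 0) f) s * (Set.indicator (Set.Ioi 0) g) (y - s))
      = Set.indicator (Set.Ioo 0 y) (fun s => f s * g (y - s)) := by
  funext s
  rcases le_or_gt s 0 with h | h
  · rw [Set.indicator_of_notMem (by simpa using h), zero_mul,
      Set.indicator_of_notMem (fun hs => absurd hs.1 (not_lt.2 h))]
  · rcases lt_or_ge s y with h2 | h2
    · rw [Set.indicator_of_mem (Set.mem_Ioi.2 h),
        Set.indicator_of_mem (Set.mem_Ioi.2 (by linarith : (0:ℝ) < y - s)),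
        Set.indicator_of_mem (Set.mem_Ioo.2 ⟨h, h2⟩)]
    · rw [Set.indicator_of_notMem (by simp; linarith : y - s ∉ Set.Ioi (0:ℝ)), mul_zero,
        Set.indicator_of_notMem (fun hs => absurd hs.2 (not_lt.2 h2))]

lemma conv_ind (f g : ℝ → ℝ) (y : ℝ) :
    (Set.indicator (Set.Ioi 0) f ⋆[ContinuousLinearMap.mul ℝ ℝ, volume]
      Set.indicator (Set.Ioi 0) g) y = ∫ s in Set.Ioo 0 y, f s * g (y - s) := by
  rw [MeasureTheory.convolution_mul, ind_conv_integrand,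
    MeasureTheory.integral_indicator measurableSet_Ioo]

lemma conv_ind_of_le (f g : ℝ → ℝ) {y : ℝ} (hy : y ≤ 0) :
    (Set.indicator (Set.Ioi 0) f ⋆[ContinuousLinearMap.mul ℝ ℝ, volume]
      Set.indicator (Set.Ioi 0) g) y = 0 := by
  rw [conv_ind, Set.Ioo_eq_empty (not_lt.2 hy)]
  simp

lemma conv_ind_of_nonneg (f g : ℝ → ℝ) {y : ℝ} (hy : 0 ≤ y) :
    (Set.indicator (Set.Ioi 0) f ⋆[ContinuousLinearMap.mul ℝ ℝ, volume]
      Set.indicator (Set.Ioi 0) g) y = ∫ s in (0:ℝ)..y, f s * g (y - s) := by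
  rw [conv_ind, intervalIntegral.integral_of_le hy, MeasureTheory.integral_Ioc_eq_integral_Ioo]

lemma cea_ind (f g : ℝ → ℝ) (y : ℝ)
    (h : IntegrableOn (fun s => f s * g (y - s)) (Set.Ioo 0 y) volume) :
    MeasureTheory.ConvolutionExistsAt (Set.indicator (Set.Ioi 0) f)
      (Set.indicator (Set.Ioi 0) g) y (ContinuousLinearMap.mul ℝ ℝ) volume := by
  unfold MeasureTheory.ConvolutionExistsAt
  simp only [ContinuousLinearMap.mul_apply']
  rw [ind_conv_integrand]
  rwa [MeasureTheory.integrable_indicator_iff measurableSet_Ioo]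

/-! ### The specific kernels -/

noncomputable def kk (α μ : ℝ) : ℝ → ℝ := fun x => x ^ (-α) / Real.Gamma (1 - α) * Real.exp (-μ * x)
noncomputable def ll (α μ : ℝ) : ℝ → ℝ := fun x => x ^ (α - 1) / Real.Gamma α * Real.exp (-μ * x)
noncomputable def PP (α μ : ℝ) : ℝ → ℝ := fun x => ∫ u in (0:ℝ)..x, ll α μ u

section kernels

variable {α μ : ℝ}

lemma ll_ii (hα0 : 0 < α) (a b : ℝ) : IntervalIntegrable (ll α μ) volume a b := by
  have : ll α μ = fun x => (Real.Gamma α)⁻¹ * (x ^ (α - 1) * Real.exp (-μ * x)) := by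
    funext x; simp only [ll]; ring
  rw [this]
  exact (ii_rpow_exp (by linarith) (-μ) a b).const_mul _

lemma kk_ii (hα1 : α < 1) (a b : ℝ) : IntervalIntegrable (kk α μ) volume a b := by
  have : kk α μ = fun x => (Real.Gamma (1 - α))⁻¹ * (x ^ (-α) * Real.exp (-μ * x)) := by
    funext x; simp only [kk]; ring
  rw [this]
  exact (ii_rpow_exp (by linarith) (-μ) a b).const_mul _

lemma ll_meas : Measurable (ll α μ) :=
  ((measurable_id'.pow_const _).div_const _).mul
    (Real.measurable_exp.comp (measurable_const.mul measurable_id))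

lemma kk_meas : Measurable (kk α μ) :=
  ((measurable_id'.pow_const _).div_const _).mul
    (Real.measurable_exp.comp (measurable_const.mul measurable_id))

lemma ll_nonneg (hα0 : 0 < α) {x : ℝ} (hx : 0 ≤ x) : 0 ≤ ll α μ x :=
  mul_nonneg (div_nonneg (Real.rpow_nonneg hx _) (Real.Gamma_pos_of_pos hα0).le)
    (Real.exp_nonneg _)

lemma kk_nonneg (hα1 : α < 1) {x : ℝ} (hx : 0 ≤ x) : 0 ≤ kk α μ x :=
  mul_nonneg (div_nonneg (Real.rpow_nonneg hx _)
    (Real.Gamma_pos_of_pos (by linarith : (0:ℝ) < 1 - α)).le) (Real.exp_nonneg _)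

/-- Integrability of the Beta-type integrand. -/
lemma beta_int (hα0 : 0 < α) (hα1 : α < 1) {x : ℝ} (hx : 0 < x) :
    IntegrableOn (fun s => ll α μ s * kk α μ (x - s)) (Set.Ioo 0 x) volume := by
  have h1 : IntervalIntegrable (fun s => ll α μ s * kk α μ (x - s)) volume 0 (x/2) := by
    apply (ll_ii hα0 0 (x/2)).mul_continuousOn
    rw [Set.uIcc_of_le (by linarith)]
    have hcont : ContinuousOn (fun s : ℝ => (x - s) ^ (-α)) (Set.Icc 0 (x/2)) := by
      apply ContinuousOn.rpow_const (continuous_const.sub continuous_id).continuousOn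
      intro s hs
      exact Or.inl (by intro h; simp at hs h; nlinarith [hs.1, hs.2])
    exact (hcont.div_const _).mul
      ((Real.continuous_exp.comp (continuous_const.mul (continuous_const.sub
        continuous_id))).continuousOn)
  have h2 : IntervalIntegrable (fun s => ll α μ s * kk α μ (x - s)) volume (x/2) x := by
    apply IntervalIntegrable.continuousOn_mul
    · have h := (kk_ii (α := α) (μ := μ) hα1 (x/2) 0).comp_sub_left x
      simpa [show x - x/2 = x/2 by ring] using h
    · rw [Set.uIcc_of_le (by linarith)]
      have hcont : ContinuousOn (fun s : ℝ => s ^ (α - 1)) (Set.Icc (x/2) x) := by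
        apply ContinuousOn.rpow_const continuous_id.continuousOn
        intro s hs
        exact Or.inl (by simp only [id]; simp at hs; nlinarith [hs.1])
      exact (hcont.div_const _).mul
        ((Real.continuous_exp.comp (continuous_const.mul continuous_id)).continuousOn)
  exact (intervalIntegrable_iff_integrableOn_Ioo_of_le hx.le).1 (h1.trans h2)

end kernels

section conv

variable {α μ : ℝ}

lemma GK_eq (hα0 : 0 < α) (hα1 : α < 1) :
    (Set.indicator (Set.Ioi 0) (ll α μ) ⋆[ContinuousLinearMap.mul ℝ ℝ, volume]
      Set.indicator (Set.Ioi 0) (kk α μ))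
      = Set.indicator (Set.Ioi 0) (fun x => Real.exp (-μ * x)) := by
  funext y
  rcases lt_or_ge 0 y with h | h
  · rw [conv_ind_of_nonneg _ _ h.le, Set.indicator_of_mem (Set.mem_Ioi.2 h)]
    exact sonine_core hα0 hα1 h
  · rw [conv_ind_of_le _ _ h, Set.indicator_of_notMem (by simpa using h)]

lemma HG_eq :
    (Set.indicator (Set.Ioi (0:ℝ)) (fun _ => (1:ℝ)) ⋆[ContinuousLinearMap.mul ℝ ℝ, volume]
      Set.indicator (Set.Ioi 0) (ll α μ)) = Set.indicator (Set.Ioi 0) (PP α μ) := by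
  funext y
  rcases lt_or_ge 0 y with h | h
  · rw [conv_ind_of_nonneg _ _ h.le, Set.indicator_of_mem (Set.mem_Ioi.2 h)]
    simp only [one_mul]
    rw [intervalIntegral.integral_comp_sub_left (ll α μ) y]
    simp [PP]
  · rw [conv_ind_of_le _ _ h, Set.indicator_of_notMem (by simpa using h)]

lemma cea_HG (hα0 : 0 < α) (y : ℝ) :
    ConvolutionExistsAt (Set.indicator (Set.Ioi (0:ℝ)) (fun _ => (1:ℝ)))
      (Set.indicator (Set.Ioi 0) (ll α μ)) y (ContinuousLinearMap.mul ℝ ℝ) volume := by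
  apply cea_ind
  rcases le_or_gt y 0 with h | h
  · rw [Set.Ioo_eq_empty (not_lt.2 h)]; exact integrableOn_empty
  · simp only [one_mul]
    have hII := (ll_ii (α := α) (μ := μ) hα0 y 0).comp_sub_left y
    have hII' : IntervalIntegrable (fun s => ll α μ (y - s)) volume 0 y := by
      simpa using hII
    exact (intervalIntegrable_iff_integrableOn_Ioo_of_le h.le).1 hII'

lemma cea_GK (hα0 : 0 < α) (hα1 : α < 1) (y : ℝ) :
    ConvolutionExistsAt (Set.indicator (Set.Ioi 0) (ll α μ))
      (Set.indicator (Set.Ioi 0) (kk α μ)) y (ContinuousLinearMap.mul ℝ ℝ) volume := by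
  apply cea_ind
  rcases le_or_gt y 0 with h | h
  · rw [Set.Ioo_eq_empty (not_lt.2 h)]; exact integrableOn_empty
  · exact beta_int hα0 hα1 h

lemma cea_HE (t : ℝ) :
    ConvolutionExistsAt (Set.indicator (Set.Ioi (0:ℝ)) (fun _ => (1:ℝ)))
      (Set.indicator (Set.Ioi 0) (fun x => Real.exp (-μ * x))) t
      (ContinuousLinearMap.mul ℝ ℝ) volume := by
  apply cea_ind
  have hcont : Continuous (fun s : ℝ => (1:ℝ) * Real.exp (-μ * (t - s))) :=
    continuous_const.mul (Real.continuous_exp.comp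
      (continuous_const.mul (continuous_const.sub continuous_id)))
  exact (hcont.integrableOn_Icc).mono_set Set.Ioo_subset_Icc_self

end conv

/-- The tempered fractional pair satisfies the Sonine condition. -/
theorem sonine_tempered (α μ : ℝ) (hα0 : 0 < α) (hα1 : α < 1) (hμ : 0 < μ)
    (k l : ℝ → ℝ)
    (hk : ∀ t, k t = t ^ (-α) / Real.Gamma (1 - α) * Real.exp (-μ * t))
    (hl : ∀ t, l t = t ^ (α - 1) / Real.Gamma α * Real.exp (-μ * t)
        + μ * ∫ s in (0:ℝ)..t, s ^ (α - 1) / Real.Gamma α * Real.exp (-μ * s))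
    (t : ℝ) (ht : 0 < t) :
    ∫ s in (0:ℝ)..t, k (t - s) * l s = 1 := by
  -- nonnegativity and norms
  have hGnn : ∀ x, 0 ≤ Set.indicator (Set.Ioi 0) (ll α μ) x :=
    fun x => Set.indicator_nonneg (fun a ha => ll_nonneg hα0 (le_of_lt ha)) x
  have hKnn : ∀ x, 0 ≤ Set.indicator (Set.Ioi 0) (kk α μ) x :=
    fun x => Set.indicator_nonneg (fun a ha => kk_nonneg hα1 (le_of_lt ha)) x
  have hHnn : ∀ x : ℝ, 0 ≤ Set.indicator (Set.Ioi (0:ℝ)) (fun _ => (1:ℝ)) x :=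
    fun x => Set.indicator_nonneg (fun a _ => zero_le_one) x
  have hGnorm : (fun x => ‖Set.indicator (Set.Ioi 0) (ll α μ) x‖)
      = Set.indicator (Set.Ioi 0) (ll α μ) := funext fun x => Real.norm_of_nonneg (hGnn x)
  have hKnorm : (fun x => ‖Set.indicator (Set.Ioi 0) (kk α μ) x‖)
      = Set.indicator (Set.Ioi 0) (kk α μ) := funext fun x => Real.norm_of_nonneg (hKnn x)
  have hHnorm : (fun x => ‖Set.indicator (Set.Ioi (0:ℝ)) (fun _ => (1:ℝ)) x‖)
      = Set.indicator (Set.Ioi (0:ℝ)) (fun _ => (1:ℝ)) :=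
    funext fun x => Real.norm_of_nonneg (hHnn x)
  -- measurability
  have hGm : AEStronglyMeasurable (Set.indicator (Set.Ioi 0) (ll α μ)) volume :=
    (((ll_meas (α := α) (μ := μ))).indicator measurableSet_Ioi).aestronglyMeasurable
  have hKm : AEStronglyMeasurable (Set.indicator (Set.Ioi 0) (kk α μ)) volume :=
    (((kk_meas (α := α) (μ := μ))).indicator measurableSet_Ioi).aestronglyMeasurable
  have hHm : AEStronglyMeasurable (Set.indicator (Set.Ioi (0:ℝ)) (fun _ => (1:ℝ))) volume :=
    (measurable_const.indicator measurableSet_Ioi).aestronglyMeasurable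
  -- the primitive
  have hPc : Continuous (PP α μ) := intervalIntegral.continuous_primitive (ll_ii hα0) 0
  have hPbound : ∀ s ∈ Set.Ioo (0:ℝ) t, ‖PP α μ s‖ ≤ PP α μ t := by
    intro s hs
    have hl₀ae : 0 ≤ᵐ[volume.restrict (Set.Ioc (0:ℝ) t)] ll α μ :=
      (MeasureTheory.ae_restrict_iff' measurableSet_Ioc).2
        (Filter.Eventually.of_forall fun u hu => ll_nonneg hα0 hu.1.le)
    have h1 : PP α μ s ≤ PP α μ t :=
      intervalIntegral.integral_mono_interval le_rfl hs.1.le hs.2.le hl₀ae (ll_ii hα0 0 t)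
    have h0 : 0 ≤ PP α μ s := by
      apply intervalIntegral.integral_nonneg hs.1.le
      intro u hu
      exact ll_nonneg hα0 hu.1
    rw [Real.norm_of_nonneg h0]
    exact h1
  -- integrability of the (H ⋆ G) * K integrand
  have hKint : IntegrableOn (fun s => kk α μ (t - s)) (Set.Ioo 0 t) volume := by
    have h := (kk_ii (α := α) (μ := μ) hα1 t 0).comp_sub_left t
    have h' : IntervalIntegrable (fun s => kk α μ (t - s)) volume 0 t := by simpa using h
    exact (intervalIntegrable_iff_integrableOn_Ioo_of_le ht.le).1 h'
  have hintPK : Integrable (fun s => Set.indicator (Set.Ioi 0) (PP α μ) s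
      * Set.indicator (Set.Ioi 0) (kk α μ) (t - s)) volume := by
    rw [ind_conv_integrand, MeasureTheory.integrable_indicator_iff measurableSet_Ioo]
    refine Integrable.mono' (hKint.norm.const_mul (PP α μ t)) ?_ ?_
    · exact ((hPc.measurable.mul ((kk_meas (α := α) (μ := μ)).comp
        (measurable_const.sub measurable_id))).aestronglyMeasurable).restrict
    · refine (MeasureTheory.ae_restrict_iff' measurableSet_Ioo).2
        (Filter.Eventually.of_forall fun s hs => ?_)
      rw [norm_mul]
      exact mul_le_mul_of_nonneg_right (hPbound s hs) (norm_nonneg _)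
  have ceaPK : ConvolutionExistsAt
      (μ • (Set.indicator (Set.Ioi (0:ℝ)) (fun _ => (1:ℝ)) ⋆[ContinuousLinearMap.mul ℝ ℝ, volume]
        Set.indicator (Set.Ioi 0) (ll α μ)))
      (Set.indicator (Set.Ioi 0) (kk α μ)) t (ContinuousLinearMap.mul ℝ ℝ) volume := by
    unfold ConvolutionExistsAt
    simp only [ContinuousLinearMap.mul_apply', HG_eq, Pi.smul_apply, smul_eq_mul]
    have heq : (fun s => μ * Set.indicator (Set.Ioi 0) (PP α μ) s
        * Set.indicator (Set.Ioi 0) (kk α μ) (t - s))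
        = fun s => μ * (Set.indicator (Set.Ioi 0) (PP α μ) s
          * Set.indicator (Set.Ioi 0) (kk α μ) (t - s)) := by
      funext s; ring
    rw [heq]
    exact hintPK.const_mul μ
  -- associativity
  have hassoc := MeasureTheory.convolution_assoc
      (L := ContinuousLinearMap.mul ℝ ℝ) (L₂ := ContinuousLinearMap.mul ℝ ℝ)
      (L₃ := ContinuousLinearMap.mul ℝ ℝ) (L₄ := ContinuousLinearMap.mul ℝ ℝ)
      (f := Set.indicator (Set.Ioi (0:ℝ)) (fun _ => (1:ℝ)))
      (g := Set.indicator (Set.Ioi 0) (ll α μ))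
      (k := Set.indicator (Set.Ioi 0) (kk α μ))
      (fun x y z => mul_assoc x y z) (x₀ := t) hHm hGm hKm
      (Filter.Eventually.of_forall (cea_HG hα0))
      (by rw [hGnorm, hKnorm]; exact Filter.Eventually.of_forall (cea_GK hα0 hα1))
      (by rw [hHnorm, hGnorm, hKnorm, GK_eq hα0 hα1]; exact cea_HE t)
  -- the exponential integral
  have hexp : ∫ x in (0:ℝ)..t, Real.exp (-μ * x) = (1 - Real.exp (-μ * t)) / μ := by
    have h := intervalIntegral.integral_comp_mul_left (f := Real.exp) (a := 0) (b := t)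
      (c := -μ) (neg_ne_zero.2 hμ.ne')
    rw [integral_exp] at h
    simp only [mul_zero, Real.exp_zero, smul_eq_mul] at h
    rw [h, inv_neg, div_eq_mul_inv]
    ring
  -- indicator splitting
  have hsplit : Set.indicator (Set.Ioi 0) (fun x => ll α μ x + μ * PP α μ x)
      = Set.indicator (Set.Ioi 0) (ll α μ) + μ • Set.indicator (Set.Ioi 0) (PP α μ) := by
    funext x
    by_cases h : x ∈ Set.Ioi (0:ℝ) <;>
      simp [Set.indicator_of_mem, Set.indicator_of_notMem, h]
  -- main computation
  calc ∫ s in (0:ℝ)..t, k (t - s) * l s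
      = ∫ s in (0:ℝ)..t, (fun x => ll α μ x + μ * PP α μ x) s * kk α μ (t - s) := by
        refine intervalIntegral.integral_congr fun s hs => ?_
        simp only [hk, hl, ll, kk, PP]
        ring
    _ = (Set.indicator (Set.Ioi 0) (fun x => ll α μ x + μ * PP α μ x)
          ⋆[ContinuousLinearMap.mul ℝ ℝ, volume] Set.indicator (Set.Ioi 0) (kk α μ)) t :=
        (conv_ind_of_nonneg _ _ ht.le).symm
    _ = ((Set.indicator (Set.Ioi 0) (ll α μ)
          + μ • (Set.indicator (Set.Ioi (0:ℝ)) (fun _ => (1:ℝ))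
              ⋆[ContinuousLinearMap.mul ℝ ℝ, volume] Set.indicator (Set.Ioi 0) (ll α μ)))
          ⋆[ContinuousLinearMap.mul ℝ ℝ, volume] Set.indicator (Set.Ioi 0) (kk α μ)) t := by
        rw [hsplit, HG_eq]
    _ = (Set.indicator (Set.Ioi 0) (ll α μ) ⋆[ContinuousLinearMap.mul ℝ ℝ, volume]
          Set.indicator (Set.Ioi 0) (kk α μ)) t
        + ((μ • (Set.indicator (Set.Ioi (0:ℝ)) (fun _ => (1:ℝ))
              ⋆[ContinuousLinearMap.mul ℝ ℝ, volume] Set.indicator (Set.Ioi 0) (ll α μ)))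
          ⋆[ContinuousLinearMap.mul ℝ ℝ, volume] Set.indicator (Set.Ioi 0) (kk α μ)) t :=
        MeasureTheory.ConvolutionExistsAt.add_distrib (cea_GK hα0 hα1 t) ceaPK
    _ = Real.exp (-μ * t)
        + μ * ((Set.indicator (Set.Ioi (0:ℝ)) (fun _ => (1:ℝ))
            ⋆[ContinuousLinearMap.mul ℝ ℝ, volume]
            (Set.indicator (Set.Ioi 0) (ll α μ) ⋆[ContinuousLinearMap.mul ℝ ℝ, volume]
              Set.indicator (Set.Ioi 0) (kk α μ))) t) := by
        rw [MeasureTheory.smul_convolution, Pi.smul_apply, smul_eq_mul, hassoc,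
          GK_eq hα0 hα1, Set.indicator_of_mem (Set.mem_Ioi.2 ht)]
    _ = Real.exp (-μ * t) + μ * ((1 - Real.exp (-μ * t)) / μ) := by
        rw [GK_eq hα0 hα1, conv_ind_of_nonneg _ _ ht.le]
        simp only [one_mul]
        rw [intervalIntegral.integral_comp_sub_left (fun u => Real.exp (-μ * u)) t]
        simp only [sub_self, sub_zero]
        rw [hexp]
    _ = 1 := by field_simp; ring
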